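/- arXiv:1707.04106 — 9 statements merged into one kernel-verified Lean document; each statement's English description precedes it below -/
import Mathlib

section
/- Soundness for recall strategies: for every formula φ ∈ Φ, if ⊢ φ (φ is derivable from propositional tautologies and Armstrong's axioms by Modus Ponens), then T ⊨ φ for every transition system T under the recall semantics. -/
namespace Nav

noncomputable section

attribute [local instance] Classical.propDecidable

/-- A transition system over a set of views `V` (Definition 2 of the paper):
a set of states `S`, an indistinguishability equivalence relation `sim` on `S`,
a map `star` from views to equivalence classes of states, a nonempty set of
instructions `I`, and for each instruction a transition map into nonempty sets
of states. -/
structure TransitionSystem (V : Type) where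
  S : Type
  sim : Setoid S
  star : V → Quotient sim
  I : Type
  instNonempty : Nonempty I
  Δ : I → S → Set S
  Δ_nonempty : ∀ i w, (Δ i w).Nonempty

variable {V : Type}

namespace TransitionSystem

/-- The equivalence class `[w]` of a state. -/
def cls (T : TransitionSystem V) (w : T.S) : Quotient T.sim := Quotient.mk T.sim w

/-- `A* = { a* | a ∈ A }`. -/
def starSet (T : TransitionSystem V) (A : Set V) : Set (Quotient T.sim) := T.star '' A

/-- A history `w₀,i₁,w₁,…,iₙ,wₙ`: the states are `w 0, …, w n` and the
instruction `iₖ` (for `1 ≤ k ≤ n`) is `i (k-1)`.  (Values of `w` above `n` and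
of `i` above `n-1` are irrelevant junk.) -/
structure History (T : TransitionSystem V) where
  n : ℕ
  w : ℕ → T.S
  i : ℕ → T.I
  valid : ∀ k < n, w (k + 1) ∈ T.Δ (i k) (w k)

variable {T : TransitionSystem V}

/-- Indistinguishability `≈` of histories: same length, same instruction
sequence, and state-wise indistinguishable states. -/
def History.Indist (h h' : History T) : Prop :=
  h.n = h'.n ∧ (∀ k < h.n, h.i k = h'.i k) ∧ ∀ k ≤ h.n, T.sim.r (h.w k) (h'.w k)

/-- `hd(h)`: the last state of a history. -/
def History.hd (h : History T) : T.S := h.w h.n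

/-- A recall strategy: a function from histories to instructions that is
constant on `≈`-equivalence classes of histories (i.e. a function on
histories modulo `≈`). -/
structure RecallStrategy (T : TransitionSystem V) where
  act : History T → T.I
  respects : ∀ h h' : History T, h.Indist h' → act h = act h'

/-- An infinite sequence `w₀,i₁,w₁,i₂,w₂,…`: states `w 0, w 1, …` and
instructions `i 0, i 1, …` where `i k` is the instruction `i_{k+1}` used to go
from `w k` to `w (k+1)`. -/
structure Path (T : TransitionSystem V) where
  w : ℕ → T.S
  i : ℕ → T.I

/-- Every finite prefix of the sequence is a history. -/
def Path.Valid (π : Path T) : Prop := ∀ k, π.w (k + 1) ∈ T.Δ (π.i k) (π.w k)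

/-- The prefix history `w₀,i₁,…,wₙ` of a valid infinite sequence. -/
def Path.prefixH (π : Path T) (hv : π.Valid) (n : ℕ) : History T :=
  ⟨n, π.w, π.i, fun k _ => hv k⟩

/-- `π` is a path under the recall strategy `s` (Definition 7): every finite
prefix is a history and each instruction is the one prescribed by `s` on the
preceding prefix history. -/
def IsPathUnder (s : RecallStrategy T) (π : Path T) : Prop :=
  ∃ hv : π.Valid, ∀ k, π.i k = s.act (π.prefixH hv k)

/-- `Path_s(A)`: the paths under `s` whose initial class is in `A*`. -/
def PathSet (s : RecallStrategy T) (A : Set V) : Set (Path T) :=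
  {π | IsPathUnder s π ∧ T.cls (π.w 0) ∈ T.starSet A}

/-- `Visit_s(B)`: the paths under `s` that visit a class in `B*`. -/
def VisitSet (s : RecallStrategy T) (B : Set V) : Set (Path T) :=
  {π | IsPathUnder s π ∧ ∃ k, T.cls (π.w k) ∈ T.starSet B}

/-- The number of initial states dropped by the truncation `h|_B`
(Definition 12): the least `k` such that either `k = n` or `[wₖ] ∈ B*`. -/
def History.truncIdx (h : History T) (B : Set V) : ℕ :=
  Nat.find (p := fun k => k = h.n ∨ T.cls (h.w k) ∈ T.starSet B) ⟨h.n, Or.inl rfl⟩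

/-- The truncation `h|_B` of a history (Definition 12): repeatedly drop the
first state while the length is positive and the first class is not in `B*`. -/
def History.trunc (h : History T) (B : Set V) : History T where
  n := h.n - h.truncIdx B
  w := fun k => h.w (h.truncIdx B + k)
  i := fun k => h.i (h.truncIdx B + k)
  valid := fun k hk => h.valid (h.truncIdx B + k) (by omega)

/-- The composition `s₁ ∘_B s₂` of recall strategies (Definition 13): follow
`s₁` while no state of the history has its class in `B*`; once such a state is
reached, follow `s₂` on the truncated history. -/
def RecallStrategy.compB (s1 s2 : RecallStrategy T) (B : Set V) : RecallStrategy T where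
  act := fun h =>
    if ∀ k ≤ h.n, T.cls (h.w k) ∉ T.starSet B then s1.act h
    else s2.act (h.trunc B)
  respects := by
    intro h h' hi
    obtain ⟨hn, hins, hsim⟩ := hi
    have hcls : ∀ k ≤ h.n, T.cls (h.w k) = T.cls (h'.w k) := fun k hk => Quot.sound (hsim k hk)
    have hcond : (∀ k ≤ h.n, T.cls (h.w k) ∉ T.starSet B) ↔
        (∀ k ≤ h'.n, T.cls (h'.w k) ∉ T.starSet B) := by
      constructor
      · intro hc k hk
        rw [← hcls k (by omega)]
        exact hc k (by omega)
      · intro hc k hk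
        rw [hcls k hk]
        exact hc k (by omega)
    have d1 : h.truncIdx B ≤ h.n := Nat.find_le (Or.inl rfl)
    have d2 : h'.truncIdx B ≤ h'.n := Nat.find_le (Or.inl rfl)
    have p1 : h.truncIdx B = h.n ∨ T.cls (h.w (h.truncIdx B)) ∈ T.starSet B :=
      Nat.find_spec (p := fun k => k = h.n ∨ T.cls (h.w k) ∈ T.starSet B) ⟨h.n, Or.inl rfl⟩
    have p2 : h'.truncIdx B = h'.n ∨ T.cls (h'.w (h'.truncIdx B)) ∈ T.starSet B :=
      Nat.find_spec (p := fun k => k = h'.n ∨ T.cls (h'.w k) ∈ T.starSet B) ⟨h'.n, Or.inl rfl⟩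
    have hidx : h.truncIdx B = h'.truncIdx B := by
      have le1 : h'.truncIdx B ≤ h.truncIdx B := by
        apply Nat.find_le
        rcases p1 with e | hb
        · exact Or.inl (by omega)
        · exact Or.inr (by rw [← hcls _ d1]; exact hb)
      have le2 : h.truncIdx B ≤ h'.truncIdx B := by
        apply Nat.find_le
        rcases p2 with e | hb
        · exact Or.inl (by omega)
        · exact Or.inr (by rw [hcls _ (by omega)]; exact hb)
      omega
    show (if ∀ k ≤ h.n, T.cls (h.w k) ∉ T.starSet B then s1.act h else s2.act (h.trunc B)) =
        (if ∀ k ≤ h'.n, T.cls (h'.w k) ∉ T.starSet B then s1.act h' else s2.act (h'.trunc B))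
    by_cases hc : ∀ k ≤ h.n, T.cls (h.w k) ∉ T.starSet B
    · rw [if_pos hc, if_pos (hcond.mp hc)]
      exact s1.respects h h' ⟨hn, hins, hsim⟩
    · rw [if_neg hc, if_neg (fun hc' => hc (hcond.mpr hc'))]
      apply s2.respects
      refine ⟨?_, ?_, ?_⟩
      · show h.n - h.truncIdx B = h'.n - h'.truncIdx B
        omega
      · intro k hk
        have hk' : k < h.n - h.truncIdx B := hk
        show h.i (h.truncIdx B + k) = h'.i (h'.truncIdx B + k)
        rw [← hidx]
        exact hins _ (by omega)
      · intro k hk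
        have hk' : k ≤ h.n - h.truncIdx B := hk
        show T.sim.r (h.w (h.truncIdx B + k)) (h'.w (h'.truncIdx B + k))
        rw [← hidx]
        exact hsim _ (by omega)

/-- The truncation `π|_B` of a path (Definition 15): drop initial states until
the first one whose class is in `B*` (if no such state exists the truncation is
left undefined by the paper; we take it to be `π` itself). -/
def Path.trunc (π : Path T) (B : Set V) : Path T :=
  if H : ∃ k, T.cls (π.w k) ∈ T.starSet B then
    ⟨fun k => π.w (Nat.find H + k), fun k => π.i (Nat.find H + k)⟩
  else π

/-- `π` is a path under a memoryless strategy `s : S/∼ → I` (Definition 6). -/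
def IsPathUnderM (s : Quotient T.sim → T.I) (π : Path T) : Prop :=
  π.Valid ∧ ∀ k, π.i k = s (T.cls (π.w k))

/-- `Path_s(A)` for a memoryless strategy. -/
def PathSetM (s : Quotient T.sim → T.I) (A : Set V) : Set (Path T) :=
  {π | IsPathUnderM s π ∧ T.cls (π.w 0) ∈ T.starSet A}

/-- `Visit_s(B)` for a memoryless strategy. -/
def VisitSetM (s : Quotient T.sim → T.I) (B : Set V) : Set (Path T) :=
  {π | IsPathUnderM s π ∧ ∃ k, T.cls (π.w k) ∈ T.starSet B}

end TransitionSystem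

open TransitionSystem

/-- The language Φ: atomic formulae `A ▷ B` for nonempty `A, B ⊆ V`, closed
under negation and implication (Definition 1). -/
inductive Formula (V : Type) : Type
  | nav : (A B : Set V) → A.Nonempty → B.Nonempty → Formula V
  | neg : Formula V → Formula V
  | imp : Formula V → Formula V → Formula V

/-- Classical evaluation of a formula under a truth assignment to the atoms. -/
def Formula.evalWith (v : Set V → Set V → Prop) : Formula V → Prop
  | .nav A B _ _ => v A B
  | .neg φ => ¬ φ.evalWith v
  | .imp φ ψ => φ.evalWith v → ψ.evalWith v

/-- Propositional tautologies of the language Φ. -/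
def Formula.Tautology (φ : Formula V) : Prop := ∀ v, φ.evalWith v

/-- Derivability `X ⊢ φ` from propositional tautologies and Armstrong's axioms
(Reflexivity, Augmentation, Transitivity) using Modus Ponens, with the
formulae of `X` as additional axioms.  Plain `⊢ φ` is `ArmDeriv ∅ φ`. -/
inductive ArmDeriv (X : Set (Formula V)) : Formula V → Prop
  | hyp {φ : Formula V} : φ ∈ X → ArmDeriv X φ
  | taut {φ : Formula V} : φ.Tautology → ArmDeriv X φ
  | refl {A B : Set V} (hA : A.Nonempty) (hB : B.Nonempty) :
      A ⊆ B → ArmDeriv X (.nav A B hA hB)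
  | aug {A B C : Set V} (hA : A.Nonempty) (hB : B.Nonempty) (hC : C.Nonempty) :
      ArmDeriv X (.imp (.nav A B hA hB) (.nav (A ∪ C) (B ∪ C) hA.inl hB.inl))
  | trans {A B C : Set V} (hA : A.Nonempty) (hB : B.Nonempty) (hC : C.Nonempty) :
      ArmDeriv X (.imp (.nav A B hA hB) (.imp (.nav B C hB hC) (.nav A C hA hC)))
  | mp {φ ψ : Formula V} : ArmDeriv X (.imp φ ψ) → ArmDeriv X φ → ArmDeriv X ψ

/-- Derivability in the memoryless proof system: propositional tautologies,
Reflexivity, Augmentation, Monotonicity, and Modus Ponens. -/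
inductive MemDeriv (X : Set (Formula V)) : Formula V → Prop
  | hyp {φ : Formula V} : φ ∈ X → MemDeriv X φ
  | taut {φ : Formula V} : φ.Tautology → MemDeriv X φ
  | refl {A B : Set V} (hA : A.Nonempty) (hB : B.Nonempty) :
      A ⊆ B → MemDeriv X (.nav A B hA hB)
  | aug {A B C : Set V} (hA : A.Nonempty) (hB : B.Nonempty) (hC : C.Nonempty) :
      MemDeriv X (.imp (.nav A B hA hB) (.nav (A ∪ C) (B ∪ C) hA.inl hB.inl))
  | mono {A A' B : Set V} (hA : A.Nonempty) (hA' : A'.Nonempty) (hB : B.Nonempty) :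
      A ⊆ A' → MemDeriv X (.imp (.nav A' B hA' hB) (.nav A B hA hB))
  | mp {φ ψ : Formula V} : MemDeriv X (.imp φ ψ) → MemDeriv X φ → MemDeriv X ψ

/-- Satisfaction `T ⊨ φ` under the recall semantics (Definition 10):
`T ⊨ A ▷ B` iff `Path_s(A) ⊆ Visit_s(B)` for some recall strategy `s`. -/
def Sat (T : TransitionSystem V) : Formula V → Prop
  | .nav A B _ _ => ∃ s : RecallStrategy T, PathSet s A ⊆ VisitSet s B
  | .neg φ => ¬ Sat T φ
  | .imp φ ψ => Sat T φ → Sat T ψ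

/-- Satisfaction `T ⊨ φ` under the memoryless semantics (Definition 18). -/
def SatM (T : TransitionSystem V) : Formula V → Prop
  | .nav A B _ _ => ∃ s : Quotient T.sim → T.I, PathSetM s A ⊆ VisitSetM s B
  | .neg φ => ¬ SatM T φ
  | .imp φ ψ => SatM T φ → SatM T ψ

/-- `X` is consistent: no formula is derivable together with its negation. -/
def Consistent (X : Set (Formula V)) : Prop :=
  ¬ ∃ φ : Formula V, ArmDeriv X φ ∧ ArmDeriv X (.neg φ)

/-- `X` is a maximal consistent set of formulae. -/
def MaxConsistent (X : Set (Formula V)) : Prop :=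
  Consistent X ∧ ∀ φ : Formula V, φ ∈ X ∨ Formula.neg φ ∈ X

/-- The instruction set `I = {(A,B) | A ▷ B ∈ X}` of the canonical transition
system (Definition 21). -/
def CanonI (X : Set (Formula V)) : Type :=
  {p : Set V × Set V // ∃ (hA : p.1.Nonempty) (hB : p.2.Nonempty), Formula.nav p.1 p.2 hA hB ∈ X}

/-- Transitions of the canonical system (Definition 22): `Δ_{(A,B)}(w) = B` if
`w ∈ A` and `{⟲}` otherwise; the black hole `⟲` is `Sum.inr ()`. -/
def CanonΔ (X : Set (Formula V)) (i : CanonI X) : V ⊕ Unit → Set (V ⊕ Unit)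
  | .inl v => if v ∈ i.val.1 then Sum.inl '' i.val.2 else {Sum.inr ()}
  | .inr _ => {Sum.inr ()}

/-- The canonical transition system `T(X)` for the recall case: states
`V ∪ {⟲}`, indistinguishability is equality, `v* = {v}`. -/
def CanonT (X : Set (Formula V)) (_hX : MaxConsistent X) (_hV : Nonempty V) :
    TransitionSystem V where
  S := V ⊕ Unit
  sim := ⟨Eq, eq_equivalence⟩
  star := fun v => Quotient.mk _ (Sum.inl v)
  I := CanonI X
  instNonempty := by
    obtain ⟨v⟩ := _hV
    have hv : ({v} : Set V).Nonempty := Set.singleton_nonempty v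
    have hder : ArmDeriv X (Formula.nav {v} {v} hv hv) := ArmDeriv.refl hv hv subset_rfl
    rcases _hX.2 (Formula.nav {v} {v} hv hv) with hmem | hneg
    · exact ⟨⟨({v}, {v}), hv, hv, hmem⟩⟩
    · exact absurd ⟨_, hder, ArmDeriv.hyp hneg⟩ _hX.1
  Δ := CanonΔ X
  Δ_nonempty := by
    rintro ⟨⟨A, B⟩, hA, hB, -⟩ w
    cases w with
    | inl v =>
      by_cases hv : v ∈ A
      · simpa [CanonΔ, hv] using hB.image (Sum.inl : V → V ⊕ Unit)
      · simp [CanonΔ, hv]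
    | inr u => simp [CanonΔ]

/-- The chain `G^s_0 ⊆ G^s_1 ⊆ …` of Definition 23: `G^s_0 = G` and
`G^s_{n+1} = G^s_n ∪ { hd(h) | h a history with Δ_{s⟦h⟧}(hd(h)) ⊆ G^s_n }`. -/
def Gset (X : Set (Formula V)) (hX : MaxConsistent X) (hV : Nonempty V)
    (s : RecallStrategy (CanonT X hX hV)) (G : Set V) : ℕ → Set (V ⊕ Unit)
  | 0 => Sum.inl '' G
  | n + 1 =>
      Gset X hX hV s G n ∪
        {v | ∃ h : History (CanonT X hX hV),
              h.hd = v ∧ (CanonT X hX hV).Δ (s.act h) h.hd ⊆ Gset X hX hV s G n}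

/-- Soundness for recall strategies: if `⊢ φ` then `T ⊨ φ` for
every transition system `T` under the recall semantics. -/
theorem recall_soundness [Fintype V] (φ : Formula V)
    (h : ArmDeriv (∅ : Set (Formula V)) φ) :
    ∀ T : TransitionSystem V, Sat T φ := by
  intro T
  induction h with
  | hyp hm => exact absurd hm (Set.notMem_empty _)
  | taut ht =>
      have key : ∀ ψ : Formula V, Sat T ψ ↔ ψ.evalWith
          (fun A B => ∃ s : RecallStrategy T, PathSet s A ⊆ VisitSet s B) := by
        intro ψ
        induction ψ with
        | nav A B hA hB => exact Iff.rfl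
        | neg ψ ih => exact not_congr ih
        | imp ψ χ ih1 ih2 => exact imp_congr ih1 ih2
      exact (key _).mpr (ht _)
  | refl hA hB hsub =>
      obtain ⟨i0⟩ := T.instNonempty
      refine ⟨⟨fun _ => i0, fun _ _ _ => rfl⟩, ?_⟩
      rintro π ⟨hp, h0⟩
      exact ⟨hp, 0, Set.image_mono (f := T.star) hsub h0⟩
  | @aug A B C hA hB hC =>
      rintro ⟨s, hs⟩
      refine ⟨s, ?_⟩
      rintro π ⟨hp, h0⟩
      have hu : T.starSet (A ∪ C) = T.starSet A ∪ T.starSet C := Set.image_union _ _ _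
      rw [hu] at h0
      have hBsub : T.starSet B ⊆ T.starSet (B ∪ C) :=
        Set.image_mono (f := T.star) Set.subset_union_left
      have hCsub : T.starSet C ⊆ T.starSet (B ∪ C) :=
        Set.image_mono (f := T.star) Set.subset_union_right
      rcases h0 with h0 | h0
      · obtain ⟨-, k, hk⟩ := hs ⟨hp, h0⟩
        exact ⟨hp, k, hBsub hk⟩
      · exact ⟨hp, 0, hCsub h0⟩
  | @trans A B C hA hB hC =>
      rintro ⟨s1, hs1⟩ ⟨s2, hs2⟩
      refine ⟨s1.compB s2 B, ?_⟩
      rintro π ⟨⟨hv, hact⟩, h0⟩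
      refine ⟨⟨hv, hact⟩, ?_⟩
      have HB : ∃ k, T.cls (π.w k) ∈ T.starSet B := by
        by_contra hnb
        push_neg at hnb
        have hu1 : IsPathUnder s1 π := by
          refine ⟨hv, fun k => ?_⟩
          rw [hact k]
          show (if ∀ j ≤ (π.prefixH hv k).n, T.cls ((π.prefixH hv k).w j) ∉ T.starSet B
                then s1.act (π.prefixH hv k) else s2.act ((π.prefixH hv k).trunc B))
              = s1.act (π.prefixH hv k)
          exact if_pos (fun j _ => hnb j)
        obtain ⟨-, k, hk⟩ := hs1 ⟨hu1, h0⟩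
        exact hnb k hk
      set m := Nat.find HB with hm
      have hmB : T.cls (π.w m) ∈ T.starSet B := Nat.find_spec HB
      have hmin : ∀ j < m, T.cls (π.w j) ∉ T.starSet B := fun j hj => Nat.find_min HB hj
      set π' : Path T := ⟨fun j => π.w (m + j), fun j => π.i (m + j)⟩ with hπ'
      have hv' : π'.Valid := fun k => hv (m + k)
      have hidx : ∀ k, (π.prefixH hv (m + k)).truncIdx B = m := by
        intro k
        have hle : (π.prefixH hv (m + k)).truncIdx B ≤ m := Nat.find_le (Or.inr hmB)
        rcases Nat.lt_or_ge ((π.prefixH hv (m + k)).truncIdx B) m with hlt | hge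
        · exfalso
          have hspec := Nat.find_spec
            (p := fun j => j = (π.prefixH hv (m + k)).n ∨
              T.cls ((π.prefixH hv (m + k)).w j) ∈ T.starSet B)
            ⟨(π.prefixH hv (m + k)).n, Or.inl rfl⟩
          rcases hspec with e | hb
          · have e' : (π.prefixH hv (m + k)).truncIdx B = m + k := e
            omega
          · exact hmin _ hlt hb
        · omega
      have hu2 : IsPathUnder s2 π' := by
        refine ⟨hv', fun k => ?_⟩
        have h1 : π.i (m + k) = (s1.compB s2 B).act (π.prefixH hv (m + k)) := hact (m + k)
        have hcond : ¬ ∀ j ≤ (π.prefixH hv (m + k)).n,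
            T.cls ((π.prefixH hv (m + k)).w j) ∉ T.starSet B := by
          push_neg
          exact ⟨m, by show m ≤ m + k; omega, by exact hmB⟩
        have h2 : (s1.compB s2 B).act (π.prefixH hv (m + k)) =
            s2.act ((π.prefixH hv (m + k)).trunc B) := by
          show (if ∀ j ≤ (π.prefixH hv (m + k)).n,
                T.cls ((π.prefixH hv (m + k)).w j) ∉ T.starSet B
              then s1.act (π.prefixH hv (m + k))
              else s2.act ((π.prefixH hv (m + k)).trunc B))
            = s2.act ((π.prefixH hv (m + k)).trunc B)
          exact if_neg hcond
        have h3 : s2.act ((π.prefixH hv (m + k)).trunc B) = s2.act (π'.prefixH hv' k) := by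
          apply s2.respects
          refine ⟨?_, ?_, ?_⟩
          · show (m + k) - (π.prefixH hv (m + k)).truncIdx B = k
            rw [hidx k]; omega
          · intro j hj
            show π.i ((π.prefixH hv (m + k)).truncIdx B + j) = π.i (m + j)
            rw [hidx k]
          · intro j hj
            show T.sim.r (π.w ((π.prefixH hv (m + k)).truncIdx B + j)) (π.w (m + j))
            rw [hidx k]
        show π.i (m + k) = s2.act (π'.prefixH hv' k)
        rw [h1, h2, h3]
      obtain ⟨-, k, hk⟩ := hs2 ⟨hu2, by show T.cls (π.w (m + 0)) ∈ T.starSet B; simpa using hmB⟩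
      exact ⟨m + k, hk⟩
  | mp _ _ ih1 ih2 => exact ih1 ih2
end
end Nav
end

section
/- Completeness for recall strategies: for every formula φ ∈ Φ, if T ⊨ φ for every transition system T under the recall semantics, then ⊢ φ (φ is derivable from propositional tautologies and Armstrong's axioms by Modus Ponens). -/
namespace Nav

noncomputable section

attribute [local instance] Classical.propDecidable

variable {V : Type}

open TransitionSystem

/-! ### Auxiliary development for completeness -/

/-- A valuation closed under Armstrong's axioms. -/
def ArmClosed (v : Set V → Set V → Prop) : Prop :=
  (∀ A B : Set V, A.Nonempty → B.Nonempty → A ⊆ B → v A B) ∧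
  (∀ A B C : Set V, A.Nonempty → B.Nonempty → C.Nonempty → v A B → v (A ∪ C) (B ∪ C)) ∧
  (∀ A B C : Set V, A.Nonempty → B.Nonempty → C.Nonempty → v A B → v B C → v A C)

lemma no_formula_of_empty [IsEmpty V] (φ : Formula V) : False := by
  induction φ with
  | nav A B hA hB => exact IsEmpty.false hA.choose
  | neg φ ih => exact ih
  | imp φ ψ ih _ => exact ih

lemma eval_soundness {v : Set V → Set V → Prop} (hv : ArmClosed v) {φ : Formula V}
    (h : ArmDeriv {ψ : Formula V | ψ.evalWith v} φ) : φ.evalWith v := by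
  induction h with
  | hyp hm => exact hm
  | taut ht => exact ht v
  | refl hA hB hsub => exact hv.1 _ _ hA hB hsub
  | aug hA hB hC => exact fun hab => hv.2.1 _ _ _ hA hB ‹_› hab
  | trans hA hB hC => exact fun hab hbc => hv.2.2 _ _ _ hA hB ‹_› hab hbc
  | mp _ _ ih1 ih2 => exact ih1 ih2

lemma maxcons_of_closed {v : Set V → Set V → Prop} (hv : ArmClosed v) :
    MaxConsistent {ψ : Formula V | ψ.evalWith v} := by
  constructor
  · rintro ⟨φ, h1, h2⟩
    exact (eval_soundness hv h2) (eval_soundness hv h1)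
  · intro φ
    by_cases h : φ.evalWith v
    · exact Or.inl h
    · exact Or.inr h

lemma closed_union_singletons {v : Set V → Set V → Prop} (hv : ArmClosed v)
    {B : Set V} (hB : B.Nonempty) :
    ∀ D : Finset V, D.Nonempty → (∀ d ∈ D, v {d} B) → v (↑D) B := by
  intro D
  induction D using Finset.induction_on with
  | empty => intro h _; exact absurd h (by simp)
  | @insert a D' ha ih =>
    intro _ hall
    by_cases hD' : D'.Nonempty
    · have h1 : v (↑D') B := ih hD' (fun d hd => hall d (Finset.mem_insert_of_mem hd))
      have h2 : v {a} B := hall a (Finset.mem_insert_self a D')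
      have hD'c : (↑D' : Set V).Nonempty := by exact_mod_cast hD'
      have h3 : v (↑D' ∪ {a}) (B ∪ {a}) :=
        hv.2.1 _ _ _ hD'c hB (Set.singleton_nonempty a) h1
      have h4 : v ({a} ∪ B) (B ∪ B) :=
        hv.2.1 _ _ _ (Set.singleton_nonempty a) hB hB h2
      rw [Set.union_self, Set.union_comm] at h4
      have h5 : v (↑D' ∪ {a}) B :=
        hv.2.2 _ _ _ hD'c.inl hB.inl hB h3 h4
      have hco : ((insert a D' : Finset V) : Set V) = ↑D' ∪ {a} := by
        push_cast
        rw [Set.insert_eq, Set.union_comm]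
      rw [hco]; exact h5
    · have hD'e : D' = ∅ := Finset.not_nonempty_iff_eq_empty.mp hD'
      subst hD'e
      have hco : ((insert a (∅ : Finset V) : Finset V) : Set V) = {a} := by simp
      rw [hco]; exact hall a (by simp)

lemma closed_union_set [Fintype V] {v : Set V → Set V → Prop} (hv : ArmClosed v)
    {D B : Set V} (hD : D.Nonempty) (hB : B.Nonempty)
    (h : ∀ d ∈ D, v {d} B) : v D B := by
  have hfin : D.Finite := Set.toFinite D
  have := closed_union_singletons hv hB hfin.toFinset
    ((Set.Finite.toFinset_nonempty hfin).mpr hD)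
    (fun d hd => h d (hfin.mem_toFinset.mp hd))
  rwa [Set.Finite.coe_toFinset] at this

/-- Membership of a class in `B*` in the canonical system. -/
lemma canon_cls_mem_iff {X : Set (Formula V)} (hX : MaxConsistent X) (hV : Nonempty V)
    (w : (CanonT X hX hV).S) (B : Set V) :
    (CanonT X hX hV).cls w ∈ (CanonT X hX hV).starSet B ↔ ∃ b ∈ B, w = Sum.inl b := by
  constructor
  · rintro ⟨b, hb, heq⟩
    have h2 : Sum.inl b = w := Quotient.exact heq
    exact ⟨b, hb, h2.symm⟩
  · rintro ⟨b, hb, rfl⟩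
    exact ⟨b, hb, rfl⟩

/-- Extending a history by one step. -/
def extendH {T : TransitionSystem V} (h : History T) (i : T.I) (w' : T.S)
    (hw' : w' ∈ T.Δ i h.hd) : History T where
  n := h.n + 1
  w := fun j => if j ≤ h.n then h.w j else w'
  i := fun j => if j < h.n then h.i j else i
  valid := by
    intro k hk
    show (if k + 1 ≤ h.n then h.w (k + 1) else w') ∈
      T.Δ (if k < h.n then h.i k else i) (if k ≤ h.n then h.w k else w')
    by_cases hlt : k < h.n
    · rw [if_pos (Nat.succ_le_of_lt hlt), if_pos hlt, if_pos (le_of_lt hlt)]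
      exact h.valid k hlt
    · have hkn : k = h.n := by omega
      subst hkn
      rw [if_neg (by omega : ¬ (h.n + 1 ≤ h.n)), if_neg (lt_irrefl h.n), if_pos (le_refl h.n)]
      exact hw'

lemma extendH_n {T : TransitionSystem V} (h : History T) (i : T.I) (w' : T.S)
    (hw' : w' ∈ T.Δ i h.hd) : (extendH h i w' hw').n = h.n + 1 := rfl

lemma extendH_hd {T : TransitionSystem V} (h : History T) (i : T.I) (w' : T.S)
    (hw' : w' ∈ T.Δ i h.hd) : (extendH h i w' hw').hd = w' := by
  show (if h.n + 1 ≤ h.n then h.w (h.n + 1) else w') = w'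
  rw [if_neg (by omega)]

lemma extendH_w {T : TransitionSystem V} (h : History T) (i : T.I) (w' : T.S)
    (hw' : w' ∈ T.Δ i h.hd) {j : ℕ} (hj : j ≤ h.n) : (extendH h i w' hw').w j = h.w j :=
  if_pos hj

lemma extendH_i_lt {T : TransitionSystem V} (h : History T) (i : T.I) (w' : T.S)
    (hw' : w' ∈ T.Δ i h.hd) {j : ℕ} (hj : j < h.n) : (extendH h i w' hw').i j = h.i j :=
  if_pos hj

lemma extendH_i_last {T : TransitionSystem V} (h : History T) (i : T.I) (w' : T.S)
    (hw' : w' ∈ T.Δ i h.hd) : (extendH h i w' hw').i h.n = i :=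
  if_neg (lt_irrefl _)

lemma extendH_i_eq {T : TransitionSystem V} (h : History T) (i : T.I) (w' : T.S)
    (hw' : w' ∈ T.Δ i h.hd) {j : ℕ} (hj : j = h.n) : (extendH h i w' hw').i j = i := by
  subst hj; exact if_neg (lt_irrefl _)

lemma hist_w_eq_hd {T : TransitionSystem V} (h : History T) {j : ℕ} (hj : j = h.n) :
    h.w j = h.hd := by subst hj; rfl

/-- The sequence of histories avoiding `Ginf`, following the strategy `s`. -/
def avoidSeq {T : TransitionSystem V} (s : RecallStrategy T) (Ginf : Set T.S)
    (pick : ∀ h : History T, h.hd ∉ Ginf → {w' // w' ∈ T.Δ (s.act h) h.hd ∧ w' ∉ Ginf})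
    (h0 : History T) (h0h : h0.hd ∉ Ginf) : ℕ → {h : History T // h.hd ∉ Ginf}
  | 0 => ⟨h0, h0h⟩
  | k + 1 =>
    let p := avoidSeq s Ginf pick h0 h0h k
    let c := pick p.1 p.2
    ⟨extendH p.1 (s.act p.1) c.1 c.2.1, by rw [extendH_hd]; exact c.2.2⟩

lemma avoidSeq_n {T : TransitionSystem V} (s : RecallStrategy T) (Ginf : Set T.S)
    (pick : ∀ h : History T, h.hd ∉ Ginf → {w' // w' ∈ T.Δ (s.act h) h.hd ∧ w' ∉ Ginf})
    (h0 : History T) (h0h : h0.hd ∉ Ginf) (hn0 : h0.n = 0) :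
    ∀ k, (avoidSeq s Ginf pick h0 h0h k).1.n = k := by
  intro k
  induction k with
  | zero => exact hn0
  | succ k ih =>
    simp only [avoidSeq]
    rw [extendH_n, ih]

lemma avoidSeq_hd_mem {T : TransitionSystem V} (s : RecallStrategy T) (Ginf : Set T.S)
    (pick : ∀ h : History T, h.hd ∉ Ginf → {w' // w' ∈ T.Δ (s.act h) h.hd ∧ w' ∉ Ginf})
    (h0 : History T) (h0h : h0.hd ∉ Ginf) (k : ℕ) :
    (avoidSeq s Ginf pick h0 h0h (k + 1)).1.hd ∈
      T.Δ (s.act (avoidSeq s Ginf pick h0 h0h k).1) (avoidSeq s Ginf pick h0 h0h k).1.hd := by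
  show ((avoidSeq s Ginf pick h0 h0h (k + 1)).1).hd ∈ _
  simp only [avoidSeq]
  rw [extendH_hd]
  exact (pick _ _).2.1

lemma avoidSeq_w {T : TransitionSystem V} (s : RecallStrategy T) (Ginf : Set T.S)
    (pick : ∀ h : History T, h.hd ∉ Ginf → {w' // w' ∈ T.Δ (s.act h) h.hd ∧ w' ∉ Ginf})
    (h0 : History T) (h0h : h0.hd ∉ Ginf) (hn0 : h0.n = 0) :
    ∀ k, ∀ j ≤ k, (avoidSeq s Ginf pick h0 h0h k).1.w j =
      (avoidSeq s Ginf pick h0 h0h j).1.hd := by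
  intro k
  induction k with
  | zero =>
    intro j hj
    interval_cases j
    exact hist_w_eq_hd _ (avoidSeq_n s Ginf pick h0 h0h hn0 0).symm
  | succ k ih =>
    intro j hj
    rcases Nat.lt_or_ge j (k + 1) with hlt | hge
    · have hjk : j ≤ k := by omega
      have hjn : j ≤ (avoidSeq s Ginf pick h0 h0h k).1.n := by
        rw [avoidSeq_n s Ginf pick h0 h0h hn0]; exact hjk
      have huf : (avoidSeq s Ginf pick h0 h0h (k + 1)).1.w j =
          (avoidSeq s Ginf pick h0 h0h k).1.w j := by
        simp only [avoidSeq]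
        exact extendH_w _ _ _ _ hjn
      rw [huf]
      exact ih j hjk
    · have hjk : j = k + 1 := by omega
      subst hjk
      exact hist_w_eq_hd _ (avoidSeq_n s Ginf pick h0 h0h hn0 (k + 1)).symm

lemma avoidSeq_i {T : TransitionSystem V} (s : RecallStrategy T) (Ginf : Set T.S)
    (pick : ∀ h : History T, h.hd ∉ Ginf → {w' // w' ∈ T.Δ (s.act h) h.hd ∧ w' ∉ Ginf})
    (h0 : History T) (h0h : h0.hd ∉ Ginf) (hn0 : h0.n = 0) :
    ∀ k, ∀ j < k, (avoidSeq s Ginf pick h0 h0h k).1.i j =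
      s.act (avoidSeq s Ginf pick h0 h0h j).1 := by
  intro k
  induction k with
  | zero => intro j hj; omega
  | succ k ih =>
    intro j hj
    rcases Nat.lt_or_ge j k with hlt | hge
    · have hjn : j < (avoidSeq s Ginf pick h0 h0h k).1.n := by
        rw [avoidSeq_n s Ginf pick h0 h0h hn0]; exact hlt
      have huf : (avoidSeq s Ginf pick h0 h0h (k + 1)).1.i j =
          (avoidSeq s Ginf pick h0 h0h k).1.i j := by
        simp only [avoidSeq]
        exact extendH_i_lt _ _ _ _ hjn
      rw [huf]
      exact ih j hlt
    · have hjk : j = k := by omega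
      subst hjk
      simp only [avoidSeq]
      exact extendH_i_eq _ _ _ _ (avoidSeq_n s Ginf pick h0 h0h hn0 j).symm

lemma subset_chain_of_finite {α : Type} [Finite α] {G : ℕ → Set α}
    (hmono : ∀ n, G n ⊆ G (n + 1)) (F : Set α) (hF : F ⊆ ⋃ n, G n) :
    ∃ N, F ⊆ G N := by
  have hM : Monotone G := monotone_nat_of_le_succ hmono
  refine Set.Finite.induction_on
    (motive := fun F _ => F ⊆ (⋃ n, G n) → ∃ N, F ⊆ G N) F (Set.toFinite F) ?_ ?_ hF
  · intro _; exact ⟨0, by simp⟩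
  · intro a F' ha _ ih hins
    obtain ⟨N1, hN1⟩ := ih ((Set.subset_insert a F').trans hins)
    obtain ⟨n, hn⟩ := Set.mem_iUnion.mp (hins (Set.mem_insert a F'))
    exact ⟨max N1 n, Set.insert_subset_iff.mpr
      ⟨hM (le_max_right _ _) hn, hN1.trans (hM (le_max_left _ _))⟩⟩

/-- Every member of `G^s_n` is of the form `inl u` with `v {u} B`. -/
lemma Gset_mem [Fintype V] {v : Set V → Set V → Prop} (hv : ArmClosed v)
    (hX : MaxConsistent {ψ : Formula V | ψ.evalWith v}) (hV : Nonempty V)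
    (s : RecallStrategy (CanonT {ψ : Formula V | ψ.evalWith v} hX hV)) {B : Set V}
    (hB : B.Nonempty) :
    ∀ n, ∀ w ∈ Gset {ψ : Formula V | ψ.evalWith v} hX hV s B n,
      ∃ u, w = Sum.inl u ∧ v {u} B := by
  intro n
  induction n with
  | zero =>
    rintro w ⟨b, hb, rfl⟩
    exact ⟨b, rfl, hv.1 _ _ (Set.singleton_nonempty b) hB (Set.singleton_subset_iff.mpr hb)⟩
  | succ n ih =>
    rintro w (hw | ⟨h, rfl, hsub⟩)
    · exact ih w hw
    · obtain ⟨hC, hD, hmem⟩ := (s.act h).property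
      have hvCD : v (s.act h).val.1 (s.act h).val.2 := hmem
      rcases hhd : h.hd with u | u
      · by_cases huC : u ∈ (s.act h).val.1
        · have hΔ : (CanonT _ hX hV).Δ (s.act h) (Sum.inl u) = Sum.inl '' (s.act h).val.2 := by
            show CanonΔ _ (s.act h) (Sum.inl u) = _
            simp only [CanonΔ]
            rw [if_pos huC]
          rw [hhd, hΔ] at hsub
          have hDB : ∀ d ∈ (s.act h).val.2, v {d} B := by
            intro d hd
            obtain ⟨u', hu', hvu'⟩ := ih _ (hsub ⟨d, hd, rfl⟩)
            have : d = u' := Sum.inl.inj hu'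
            rwa [this]
          have hvDB : v (s.act h).val.2 B := closed_union_set hv hD hB hDB
          have h1 : v {u} (s.act h).val.1 :=
            hv.1 _ _ (Set.singleton_nonempty u) hC (Set.singleton_subset_iff.mpr huC)
          have h2 : v {u} (s.act h).val.2 :=
            hv.2.2 _ _ _ (Set.singleton_nonempty u) hC hD h1 hvCD
          exact ⟨u, rfl, hv.2.2 _ _ _ (Set.singleton_nonempty u) hD hB h2 hvDB⟩
        · have hΔ : (CanonT _ hX hV).Δ (s.act h) (Sum.inl u) = {Sum.inr ()} := by
            show CanonΔ _ (s.act h) (Sum.inl u) = _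
            simp only [CanonΔ]
            rw [if_neg huC]
            rfl
          rw [hhd, hΔ] at hsub
          obtain ⟨u', hu', _⟩ := ih _ (hsub rfl)
          exact absurd hu' (by simp)
      · have hΔ : (CanonT _ hX hV).Δ (s.act h) (Sum.inr u) = {Sum.inr ()} := rfl
        rw [hhd, hΔ] at hsub
        obtain ⟨u', hu', _⟩ := ih _ (hsub rfl)
        exact absurd hu' (by simp)

/-- If `inl a` is outside the limit of the `G` chain, there is a path under `s`
starting at `inl a` that avoids the limit forever. -/
lemma canon_path_avoid [Fintype V] {X : Set (Formula V)}
    (hX : MaxConsistent X) (hV : Nonempty V)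
    (s : RecallStrategy (CanonT X hX hV)) (B : Set V)
    {a : V} (ha : Sum.inl a ∉ ⋃ n, Gset X hX hV s B n) :
    ∃ π : Path (CanonT X hX hV), IsPathUnder s π ∧ π.w 0 = Sum.inl a ∧
      ∀ k, π.w k ∉ ⋃ n, Gset X hX hV s B n := by
  have hmono : ∀ n, Gset X hX hV s B n ⊆ Gset X hX hV s B (n + 1) :=
    fun n => Set.subset_union_left
  have hstep : ∀ h : History (CanonT X hX hV), h.hd ∉ (⋃ n, Gset X hX hV s B n) →
      ∃ w', w' ∈ (CanonT X hX hV).Δ (s.act h) h.hd ∧ w' ∉ (⋃ n, Gset X hX hV s B n) := by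
    intro h hh
    by_contra hcon
    push_neg at hcon
    have hsub : (CanonT X hX hV).Δ (s.act h) h.hd ⊆ ⋃ n, Gset X hX hV s B n :=
      fun w' hw' => hcon w' hw'
    obtain ⟨N, hN⟩ :=
      @subset_chain_of_finite _ (inferInstanceAs (Finite (V ⊕ Unit))) _ hmono _ hsub
    exact hh (Set.mem_iUnion.mpr ⟨N + 1, Or.inr ⟨h, rfl, hN⟩⟩)
  obtain ⟨i0⟩ := (CanonT X hX hV).instNonempty
  let h0 : History (CanonT X hX hV) :=
    ⟨0, fun _ => Sum.inl a, fun _ => i0, fun k hk => absurd hk (Nat.not_lt_zero k)⟩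
  have h0h : h0.hd ∉ (⋃ n, Gset X hX hV s B n) := ha
  have hn0 : h0.n = 0 := rfl
  let pick : ∀ h : History (CanonT X hX hV), h.hd ∉ (⋃ n, Gset X hX hV s B n) →
      {w' // w' ∈ (CanonT X hX hV).Δ (s.act h) h.hd ∧ w' ∉ (⋃ n, Gset X hX hV s B n)} :=
    fun h hh => ⟨(hstep h hh).choose, (hstep h hh).choose_spec⟩
  let Q : ℕ → {h : History (CanonT X hX hV) // h.hd ∉ (⋃ n, Gset X hX hV s B n)} :=
    avoidSeq s _ pick h0 h0h
  refine ⟨⟨fun k => (Q k).1.hd, fun k => s.act (Q k).1⟩, ⟨?_, ?_⟩, ?_, ?_⟩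
  case _ =>
    intro k
    exact avoidSeq_hd_mem s _ pick h0 h0h k
  case _ =>
    intro k
    refine (s.respects _ _ ?_).symm
    refine ⟨?_, ?_, ?_⟩
    · exact (avoidSeq_n s _ pick h0 h0h hn0 k).symm
    · intro j hj
      exact (avoidSeq_i s _ pick h0 h0h hn0 k j hj).symm
    · intro j hj
      exact (avoidSeq_w s _ pick h0 h0h hn0 k j hj).symm
  case _ => rfl
  case _ => exact fun k => (Q k).2

/-- The key semantic characterization: in the canonical model of a closed
valuation, `A ▷ B` is satisfied iff `v A B`. -/
lemma canon_v_of_sat [Fintype V] {v : Set V → Set V → Prop} (hv : ArmClosed v)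
    (hX : MaxConsistent {ψ : Formula V | ψ.evalWith v}) (hV : Nonempty V)
    {A B : Set V} (hA : A.Nonempty) (hB : B.Nonempty)
    (s : RecallStrategy (CanonT {ψ : Formula V | ψ.evalWith v} hX hV))
    (hs : PathSet s A ⊆ VisitSet s B) : v A B := by
  have hall : ∀ a ∈ A, ∃ n, Sum.inl a ∈ Gset {ψ : Formula V | ψ.evalWith v} hX hV s B n := by
    intro a haA
    by_contra hno
    push_neg at hno
    have ha : Sum.inl a ∉ ⋃ n, Gset {ψ : Formula V | ψ.evalWith v} hX hV s B n := by
      intro hmem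
      obtain ⟨n, hn⟩ := Set.mem_iUnion.mp hmem
      exact hno n hn
    obtain ⟨π, hπ, hw0, havoid⟩ := canon_path_avoid hX hV s B ha
    have hπA : π ∈ PathSet s A := by
      refine ⟨hπ, ?_⟩
      rw [canon_cls_mem_iff hX hV]
      exact ⟨a, haA, hw0⟩
    obtain ⟨-, k, hk⟩ := hs hπA
    obtain ⟨b, hb, hwk⟩ := (canon_cls_mem_iff hX hV _ _).mp hk
    exact havoid k (Set.mem_iUnion.mpr ⟨0, ⟨b, hb, hwk.symm⟩⟩)
  have hsing : ∀ a ∈ A, v {a} B := by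
    intro a haA
    obtain ⟨n, hn⟩ := hall a haA
    obtain ⟨u, hu, hvB⟩ := Gset_mem hv hX hV s hB n _ hn
    have : a = u := Sum.inl.inj hu
    rwa [this]
  exact closed_union_set hv hA hB hsing

lemma canon_sat_of_v [Fintype V] {v : Set V → Set V → Prop}
    (hX : MaxConsistent {ψ : Formula V | ψ.evalWith v}) (hV : Nonempty V)
    {A B : Set V} (hA : A.Nonempty) (hB : B.Nonempty) (hAB : v A B) :
    ∃ s : RecallStrategy (CanonT {ψ : Formula V | ψ.evalWith v} hX hV),
      PathSet s A ⊆ VisitSet s B := by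
  have hmem : Formula.nav A B hA hB ∈ {ψ : Formula V | ψ.evalWith v} := hAB
  refine ⟨⟨fun _ => ⟨(A, B), hA, hB, hmem⟩, fun _ _ _ => rfl⟩, ?_⟩
  rintro π ⟨⟨hval, hins⟩, hstart⟩
  refine ⟨⟨hval, hins⟩, ?_⟩
  obtain ⟨a, haA, h0⟩ := (canon_cls_mem_iff hX hV _ _).mp hstart
  have h1 := hval 0
  rw [hins 0, h0] at h1
  have hΔ : (CanonT {ψ : Formula V | ψ.evalWith v} hX hV).Δ
      ⟨(A, B), hA, hB, hmem⟩ (Sum.inl a) = Sum.inl '' B := by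
    show CanonΔ _ _ (Sum.inl a) = _
    simp only [CanonΔ]
    rw [if_pos haA]
  rw [show ((⟨fun _ => ⟨(A, B), hA, hB, hmem⟩, fun _ _ _ => rfl⟩ :
      RecallStrategy (CanonT {ψ : Formula V | ψ.evalWith v} hX hV)).act _) =
      (⟨(A, B), hA, hB, hmem⟩ : (CanonT {ψ : Formula V | ψ.evalWith v} hX hV).I) from rfl,
    hΔ] at h1
  obtain ⟨b, hb, hw1⟩ := h1
  exact ⟨1, (canon_cls_mem_iff hX hV _ _).mpr ⟨b, hb, hw1.symm⟩⟩

lemma sat_iff_eval [Fintype V] (hV : Nonempty V) {v : Set V → Set V → Prop}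
    (hv : ArmClosed v) (hX : MaxConsistent {ψ : Formula V | ψ.evalWith v}) :
    ∀ φ : Formula V, Sat (CanonT {ψ : Formula V | ψ.evalWith v} hX hV) φ ↔ φ.evalWith v := by
  intro φ
  induction φ with
  | nav A B hA hB =>
    show (∃ s, PathSet s A ⊆ VisitSet s B) ↔ v A B
    constructor
    · rintro ⟨s, hs⟩
      exact canon_v_of_sat hv hX hV hA hB s hs
    · exact canon_sat_of_v hX hV hA hB
  | neg φ ih => exact not_congr ih
  | imp φ ψ ih1 ih2 => exact imp_congr ih1 ih2

/-- Index type for the (finitely many) instances of Armstrong's axioms. -/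
def AxIdx (V : Type) : Type :=
  (Set V × Set V) ⊕ (Set V × Set V × Set V) ⊕ (Set V × Set V × Set V)

instance [Finite V] : Finite (AxIdx V) := by
  unfold AxIdx; infer_instance

/-- The instance of an Armstrong axiom indexed by `ix` (with a harmless
default formula when the side conditions fail). -/
def axForm (φ0 : Formula V) : AxIdx V → Formula V
  | .inl (A, B) =>
    if h : A.Nonempty ∧ B.Nonempty ∧ A ⊆ B then .nav A B h.1 h.2.1 else .imp φ0 φ0
  | .inr (.inl (A, B, C)) =>
    if h : A.Nonempty ∧ B.Nonempty ∧ C.Nonempty then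
      .imp (.nav A B h.1 h.2.1) (.nav (A ∪ C) (B ∪ C) h.1.inl h.2.1.inl)
    else .imp φ0 φ0
  | .inr (.inr (A, B, C)) =>
    if h : A.Nonempty ∧ B.Nonempty ∧ C.Nonempty then
      .imp (.nav A B h.1 h.2.1) (.imp (.nav B C h.2.1 h.2.2) (.nav A C h.1 h.2.2))
    else .imp φ0 φ0

lemma axForm_deriv (φ0 : Formula V) (ix : AxIdx V) :
    ArmDeriv (∅ : Set (Formula V)) (axForm φ0 ix) := by
  have htaut : ArmDeriv (∅ : Set (Formula V)) (.imp φ0 φ0) :=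
    ArmDeriv.taut (fun v h => h)
  rcases ix with ⟨A, B⟩ | ⟨A, B, C⟩ | ⟨A, B, C⟩ <;> simp only [axForm] <;> split
  · exact ArmDeriv.refl _ _ (by assumption : _ ∧ _ ∧ _).2.2
  · exact htaut
  · exact ArmDeriv.aug _ _ (by assumption : _ ∧ _ ∧ _).2.2
  · exact htaut
  · exact ArmDeriv.trans _ _ (by assumption : _ ∧ _ ∧ _).2.2
  · exact htaut

lemma axForm_closed {w : Set V → Set V → Prop} (φ0 : Formula V)
    (hall : ∀ ix, (axForm φ0 ix).evalWith w) : ArmClosed w := by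
  refine ⟨?_, ?_, ?_⟩
  · intro A B hA hB hsub
    have h := hall (.inl (A, B))
    rw [axForm, dif_pos ⟨hA, hB, hsub⟩] at h
    exact h
  · intro A B C hA hB hC hab
    have h := hall (.inr (.inl (A, B, C)))
    rw [axForm, dif_pos ⟨hA, hB, hC⟩] at h
    exact h hab
  · intro A B C hA hB hC hab hbc
    have h := hall (.inr (.inr (A, B, C)))
    rw [axForm, dif_pos ⟨hA, hB, hC⟩] at h
    exact h hab hbc

lemma eval_foldr (v : Set V → Set V → Prop) (φ : Formula V) :
    ∀ l : List (Formula V),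
      (l.foldr .imp φ).evalWith v ↔ ((∀ γ ∈ l, γ.evalWith v) → φ.evalWith v)
  | [] => by simp
  | γ :: l => by
    have ih := eval_foldr v φ l
    show (γ.evalWith v → (l.foldr .imp φ).evalWith v) ↔ _
    rw [ih]
    constructor
    · intro h hall
      exact h (hall γ List.mem_cons_self) (fun x hx => hall x (List.mem_cons_of_mem _ hx))
    · intro h h1 h2
      refine h ?_
      intro x hx
      rcases List.mem_cons.mp hx with rfl | hx
      · exact h1
      · exact h2 x hx

lemma deriv_foldr (φ : Formula V) :
    ∀ l : List (Formula V), ArmDeriv (∅ : Set (Formula V)) (l.foldr .imp φ) →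
      (∀ γ ∈ l, ArmDeriv (∅ : Set (Formula V)) γ) → ArmDeriv (∅ : Set (Formula V)) φ
  | [] => fun h _ => h
  | γ :: l => fun h hl =>
    deriv_foldr φ l (ArmDeriv.mp h (hl γ List.mem_cons_self))
      (fun x hx => hl x (List.mem_cons_of_mem _ hx))

/-- Completeness for recall strategies: if `T ⊨ φ` for every
transition system `T` under the recall semantics, then `⊢ φ`. -/
theorem recall_completeness [Fintype V] (φ : Formula V)
    (h : ∀ T : TransitionSystem V, Sat T φ) :
    ArmDeriv (∅ : Set (Formula V)) φ := by
  rcases isEmpty_or_nonempty V with hE | hV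
  · exact (no_formula_of_empty φ).elim
  · have key : ∀ w : Set V → Set V → Prop, ArmClosed w → φ.evalWith w := by
      intro w hw
      have hX := maxcons_of_closed hw
      exact (sat_iff_eval hV hw hX φ).mp (h _)
    have hfin : (Set.range (axForm φ)).Finite := Set.finite_range _
    set l := hfin.toFinset.toList with hl
    have hmem : ∀ ix, axForm φ ix ∈ l := by
      intro ix
      rw [hl, Finset.mem_toList, Set.Finite.mem_toFinset]
      exact Set.mem_range_self ix
    have htaut : (l.foldr .imp φ).Tautology := by
      intro w
      rw [eval_foldr]
      intro hall
      exact key w (axForm_closed φ (fun ix => hall _ (hmem ix)))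
    refine deriv_foldr φ l (ArmDeriv.taut htaut) ?_
    intro γ hγ
    have hγ' : γ ∈ Set.range (axForm φ) := by
      rw [hl, Finset.mem_toList, Set.Finite.mem_toFinset] at hγ
      exact hγ
    obtain ⟨ix, rfl⟩ := hγ'
    exact axForm_deriv φ ix
end
end Nav
end

section
/- Completeness for memoryless strategies: for every formula φ ∈ Φ, if T ⊨ φ for every transition system T under the memoryless semantics, then φ is derivable in the memoryless proof system. -/
namespace Nav

noncomputable section

attribute [local instance] Classical.propDecidable

variable {V : Type}

open TransitionSystem

/-! ### Auxiliary material for memoryless completeness -/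

section MemCompleteness

/-- A valuation closed under the memoryless axioms. -/
def Standard (v : Set V → Set V → Prop) : Prop :=
  (∀ A B : Set V, A.Nonempty → B.Nonempty → A ⊆ B → v A B) ∧
  (∀ A B C : Set V, A.Nonempty → B.Nonempty → C.Nonempty → v A B → v (A ∪ C) (B ∪ C)) ∧
  (∀ A A' B : Set V, A.Nonempty → A'.Nonempty → B.Nonempty → A ⊆ A' → v A' B → v A B)

lemma Standard.key {v : Set V → Set V → Prop} (hv : Standard v)
    {A B C D : Set V} (hA : A.Nonempty) (hB : B.Nonempty) (hC : C.Nonempty) (hD : D.Nonempty)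
    (h1 : v C D) (hAB : A ⊆ B ∪ C) (hDB : D ⊆ B) : v A B := by
  have h2 := hv.2.1 C D B hC hD hB h1
  rw [Set.union_eq_self_of_subset_left hDB] at h2
  exact hv.2.2 A (C ∪ B) B hA hC.inl hB (by rwa [Set.union_comm] at hAB) h2

/-- Instructions of the canonical memoryless model for a valuation `v`. -/
def MI (v : Set V → Set V → Prop) : Type :=
  {p : Set V × Set V // p.1.Nonempty ∧ p.2.Nonempty ∧ v p.1 p.2}

/-- States of the canonical memoryless model: views, one middle state per
instruction, and a black hole `Sum.inr none`. -/
abbrev MS (v : Set V → Set V → Prop) : Type := V ⊕ Option (MI v)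

/-- The observable part of a state: all middle states are indistinguishable. -/
def toCls {v : Set V → Set V → Prop} : MS v → V ⊕ Bool
  | .inl a => .inl a
  | .inr (some _) => .inr true
  | .inr none => .inr false

def msetoid (v : Set V → Set V → Prop) : Setoid (MS v) where
  r x y := toCls x = toCls y
  iseqv := ⟨fun _ => rfl, Eq.symm, Eq.trans⟩

/-- Transitions of the canonical memoryless model. -/
def MΔ {v : Set V → Set V → Prop} (p : MI v) : MS v → Set (MS v)
  | .inl a => if a ∈ p.val.1 then {Sum.inr (some p)} else {Sum.inr none}
  | .inr (some q) => if p = q then Sum.inl '' q.val.2 else {Sum.inr none}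
  | .inr none => {Sum.inr none}

/-- The canonical memoryless model of a standard valuation. -/
def Model (v : Set V → Set V → Prop) (hv : Standard v) (hV : Nonempty V) :
    TransitionSystem V where
  S := MS v
  sim := msetoid v
  star := fun a => Quotient.mk _ (Sum.inl a)
  I := MI v
  instNonempty := by
    obtain ⟨x⟩ := hV
    exact ⟨⟨({x}, {x}), Set.singleton_nonempty x, Set.singleton_nonempty x,
      hv.1 _ _ (Set.singleton_nonempty x) (Set.singleton_nonempty x) subset_rfl⟩⟩
  Δ := MΔ
  Δ_nonempty := by
    intro p w
    match w with
    | .inl a =>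
      by_cases h : a ∈ p.val.1
      · simp [MΔ, h]
      · simp [MΔ, h]
    | .inr (some q) =>
      by_cases h : p = q
      · simpa [MΔ, h] using q.2.2.1.image (Sum.inl : V → MS v)
      · simp [MΔ, h]
    | .inr none => simp [MΔ]

variable {v : Set V → Set V → Prop} {hv : Standard v} {hV : Nonempty V}

lemma model_cls_inl_mem_starSet {A : Set V} {a : V} :
    (Model v hv hV).cls (Sum.inl a) ∈ (Model v hv hV).starSet A ↔ a ∈ A := by
  constructor
  · rintro ⟨b, hb, heq⟩
    have h' : toCls (Sum.inl b : MS v) = toCls (Sum.inl a) := Quotient.exact heq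
    simp only [toCls, Sum.inl.injEq] at h'
    exact h' ▸ hb
  · intro ha
    exact ⟨a, ha, rfl⟩

lemma model_cls_inr_not_starSet {A : Set V} {x : Option (MI v)} :
    (Model v hv hV).cls (Sum.inr x) ∉ (Model v hv hV).starSet A := by
  rintro ⟨b, hb, heq⟩
  have h : toCls (Sum.inl b : MS v) = toCls (Sum.inr x) := Quotient.exact heq
  cases x <;> simp [toCls] at h

lemma model_eq_inl_of_cls_mem {A : Set V} {w : MS v}
    (h : (Model v hv hV).cls w ∈ (Model v hv hV).starSet A) :
    ∃ a ∈ A, w = Sum.inl a := by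
  match w with
  | .inl a => exact ⟨a, model_cls_inl_mem_starSet.mp h, rfl⟩
  | .inr x => exact absurd h model_cls_inr_not_starSet

lemma model_mid_cls (q q' : MI v) :
    (Model v hv hV).cls (Sum.inr (some q)) = (Model v hv hV).cls (Sum.inr (some q')) :=
  Quotient.sound rfl

/-- Atom characterization in the canonical memoryless model. -/
lemma model_atom (hv : Standard v) (hV : Nonempty V) (A B : Set V)
    (hA : A.Nonempty) (hB : B.Nonempty) :
    (∃ s : Quotient (Model v hv hV).sim → (Model v hv hV).I,
        PathSetM s A ⊆ VisitSetM s B) ↔ v A B := by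
  constructor
  · rintro ⟨s, hs⟩
    by_contra hnv
    have hAB : ¬ A ⊆ B := fun hsub => hnv (hv.1 A B hA hB hsub)
    have hno : ∀ p : MI v, ¬ (A ⊆ B ∪ p.val.1 ∧ p.val.2 ⊆ B) := by
      rintro p ⟨h1, h2⟩
      exact hnv (hv.key hA hB p.2.1 p.2.2.1 p.2.2.2 h1 h2)
    have hx : ({hV.some} : Set V).Nonempty := Set.singleton_nonempty _
    let pI : MI v := ⟨({hV.some}, {hV.some}), hx, hx, hv.1 _ _ hx hx subset_rfl⟩
    set p : MI v := s ((Model v hv hV).cls (Sum.inr (some pI))) with hp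
    -- choose starting view
    have ha0 : ∃ a0, a0 ∈ A ∧ a0 ∉ B ∧ (p.val.2 ⊆ B → a0 ∉ p.val.1) := by
      by_cases hDB : p.val.2 ⊆ B
      · have hAC : ¬ A ⊆ B ∪ p.val.1 := fun hsub => hno p ⟨hsub, hDB⟩
        obtain ⟨a0, ha, hnb⟩ := Set.not_subset.mp hAC
        exact ⟨a0, ha, fun hb => hnb (Or.inl hb), fun _ hc => hnb (Or.inr hc)⟩
      · obtain ⟨a0, ha, hnb⟩ := Set.not_subset.mp hAB
        exact ⟨a0, ha, hnb, fun hDB' => absurd hDB' hDB⟩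
    obtain ⟨a0, ha0A, ha0B, ha0C⟩ := ha0
    -- choose landing view
    have hd0 : ∃ d0, d0 ∈ p.val.2 ∧ (¬ p.val.2 ⊆ B → d0 ∉ B) := by
      by_cases hDB : p.val.2 ⊆ B
      · exact ⟨p.2.2.1.some, p.2.2.1.some_mem, fun h => absurd hDB h⟩
      · obtain ⟨y, hy1, hy2⟩ := Set.not_subset.mp hDB
        exact ⟨y, hy1, fun _ => hy2⟩
    obtain ⟨d0, hd0D, hd0B⟩ := hd0
    -- the adversarial step function
    let step : MS v → MS v := fun w =>
      match w with
      | .inl a => if a ∈ (s ((Model v hv hV).cls (Sum.inl a))).val.1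
          then Sum.inr (some (s ((Model v hv hV).cls (Sum.inl a)))) else Sum.inr none
      | .inr (some q) => if p = q then Sum.inl d0 else Sum.inr none
      | .inr none => Sum.inr none
    let W : ℕ → MS v := fun k => step^[k] (Sum.inl a0)
    have hW0 : W 0 = Sum.inl a0 := rfl
    have hWsucc : ∀ k, W (k + 1) = step (W k) := fun k =>
      Function.iterate_succ_apply' step k (Sum.inl a0)
    let π : Path (Model v hv hV) := ⟨W, fun k => s ((Model v hv hV).cls (W k))⟩
    have hsmid : ∀ q : MI v, s ((Model v hv hV).cls (Sum.inr (some q))) = p := by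
      intro q
      rw [hp, model_mid_cls q pI]
    have hvalid : π.Valid := by
      intro k
      show W (k + 1) ∈ (Model v hv hV).Δ (s ((Model v hv hV).cls (W k))) (W k)
      rw [hWsucc k]
      rcases hWk : W k with a | (_ | q)
      · show step (Sum.inl a) ∈ MΔ (s ((Model v hv hV).cls (Sum.inl a))) (Sum.inl a)
        by_cases h : a ∈ (s ((Model v hv hV).cls (Sum.inl a))).val.1
        · simp [step, MΔ, h]
        · simp [step, MΔ, h]
      · show step (Sum.inr none) ∈ MΔ (s ((Model v hv hV).cls (Sum.inr none))) (Sum.inr none)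
        simp [step, MΔ]
      · show step (Sum.inr (some q)) ∈ MΔ (s ((Model v hv hV).cls (Sum.inr (some q)))) (Sum.inr (some q))
        rw [hsmid q]
        by_cases h : p = q
        · show (if p = q then Sum.inl d0 else Sum.inr none) ∈ MΔ p (Sum.inr (some q))
          rw [if_pos h]
          simp only [MΔ, if_pos h]
          exact ⟨d0, h ▸ hd0D, rfl⟩
        · simp [step, MΔ, h]
    -- invariant: never in a `B` view
    have hinv : ∀ k,
        (∀ a, W k = Sum.inl a → a ∉ B ∧ (p.val.2 ⊆ B → a ∉ p.val.1)) ∧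
        (∀ q, W k = Sum.inr (some q) → p = q → ¬ p.val.2 ⊆ B) := by
      intro k
      induction k with
      | zero =>
        constructor
        · intro a hWa
          rw [hW0] at hWa
          injection hWa with h
          exact h ▸ ⟨ha0B, ha0C⟩
        · intro q hWq
          rw [hW0] at hWq
          simp at hWq
      | succ k ih =>
        rw [hWsucc k]
        rcases hWk : W k with a | (_ | q)
        · obtain ⟨haB, haC⟩ := ih.1 a hWk
          by_cases h : a ∈ (s ((Model v hv hV).cls (Sum.inl a))).val.1
          · refine ⟨?_, ?_⟩
            · intro a' ha'
              simp [step, h] at ha'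
            · intro q hq hpq hDB
              simp only [step, if_pos h, Sum.inr.injEq, Option.some.injEq] at hq
              apply haC hDB
              refine (congrArg (fun x : MI v => a ∈ x.val.1) (hpq.trans (Option.some.inj hq).symm)).mpr ?_
              exact h
          · refine ⟨?_, ?_⟩
            · intro a' ha'
              simp [step, h] at ha'
            · intro q hq
              simp [step, h] at hq
        · refine ⟨?_, ?_⟩
          · intro a' ha'
            simp [step] at ha'
          · intro q' hq'
            simp [step] at hq'
        · by_cases h : p = q
          · have hDB : ¬ p.val.2 ⊆ B := ih.2 q hWk h
            refine ⟨?_, ?_⟩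
            · intro a' ha'
              simp only [step, if_pos h, Sum.inl.injEq] at ha'
              subst ha'
              exact ⟨hd0B hDB, fun hDB' => absurd hDB' hDB⟩
            · intro q' hq'
              simp [step, h] at hq'
          · refine ⟨?_, ?_⟩
            · intro a' ha'
              simp [step, h] at ha'
            · intro q' hq'
              simp [step, h] at hq'
    have hnovisit : ∀ k, (Model v hv hV).cls (W k) ∉ (Model v hv hV).starSet B := by
      intro k
      rcases hWk : W k with a | x
      · intro hmem
        exact ((hinv k).1 a hWk).1 (model_cls_inl_mem_starSet.mp hmem)
      · exact model_cls_inr_not_starSet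
    have hπ : π ∈ PathSetM s A := by
      refine ⟨⟨hvalid, fun k => rfl⟩, ?_⟩
      show (Model v hv hV).cls (W 0) ∈ (Model v hv hV).starSet A
      rw [hW0]
      exact model_cls_inl_mem_starSet.mpr ha0A
    obtain ⟨-, k, hk⟩ := hs hπ
    exact hnovisit k hk
  · intro hvab
    refine ⟨fun _ => ⟨(A, B), hA, hB, hvab⟩, ?_⟩
    rintro π ⟨⟨hval, hins⟩, hstart⟩
    obtain ⟨a, haA, hw0⟩ := model_eq_inl_of_cls_mem hstart
    refine ⟨⟨hval, hins⟩, ?_⟩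
    by_cases haB : a ∈ B
    · exact ⟨0, by rw [hw0]; exact model_cls_inl_mem_starSet.mpr haB⟩
    · have h1 : π.w 1 ∈ MΔ (⟨(A, B), hA, hB, hvab⟩ : MI v) (Sum.inl a) := by
        have := hval 0
        rwa [hins 0, hw0] at this
      rw [show MΔ (⟨(A, B), hA, hB, hvab⟩ : MI v) (Sum.inl a : MS v) =
          {Sum.inr (some ⟨(A, B), hA, hB, hvab⟩)} from by simp [MΔ, haA]] at h1
      have h2 : π.w 2 ∈ MΔ (⟨(A, B), hA, hB, hvab⟩ : MI v)
          (Sum.inr (some ⟨(A, B), hA, hB, hvab⟩) : MS v) := by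
        have := hval 1
        rwa [hins 1, Set.mem_singleton_iff.mp h1] at this
      rw [show MΔ (⟨(A, B), hA, hB, hvab⟩ : MI v)
          (Sum.inr (some ⟨(A, B), hA, hB, hvab⟩) : MS v) = Sum.inl '' B from by
        simp [MΔ]; exact fun h => absurd rfl h] at h2
      obtain ⟨b, hbB, hw2⟩ := h2
      exact ⟨2, by rw [← hw2]; exact model_cls_inl_mem_starSet.mpr hbB⟩

lemma formula_nonempty : Formula V → Nonempty V
  | .nav _ _ hA _ => ⟨hA.some⟩
  | .neg φ => formula_nonempty φ
  | .imp φ _ => formula_nonempty φ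

lemma satM_iff_evalWith (T : TransitionSystem V) :
    ∀ φ : Formula V, SatM T φ ↔ φ.evalWith
      (fun A B => ∃ s : Quotient T.sim → T.I, PathSetM s A ⊆ VisitSetM s B)
  | .nav A B hA hB => Iff.rfl
  | .neg φ => by
      simp only [SatM, Formula.evalWith, satM_iff_evalWith T φ]
  | .imp φ ψ => by
      simp only [SatM, Formula.evalWith, satM_iff_evalWith T φ, satM_iff_evalWith T ψ]

lemma evalWith_congr {u u' : Set V → Set V → Prop}
    (h : ∀ A B : Set V, A.Nonempty → B.Nonempty → (u A B ↔ u' A B)) :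
    ∀ φ : Formula V, (φ.evalWith u ↔ φ.evalWith u')
  | .nav A B hA hB => h A B hA hB
  | .neg φ => by simp only [Formula.evalWith, evalWith_congr h φ]
  | .imp φ ψ => by simp only [Formula.evalWith, evalWith_congr h φ, evalWith_congr h ψ]

def impList (L : List (Formula V)) (φ : Formula V) : Formula V := L.foldr .imp φ

lemma evalWith_impList (u : Set V → Set V → Prop) (L : List (Formula V)) (φ : Formula V) :
    (impList L φ).evalWith u ↔ ((∀ ψ ∈ L, ψ.evalWith u) → φ.evalWith u) := by
  induction L with
  | nil => simp [impList]
  | cons ψ L ih =>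
    simp only [impList, List.foldr_cons, Formula.evalWith, List.mem_cons] at *
    rw [ih]
    constructor
    · intro hh hall
      exact hh (hall ψ (Or.inl rfl)) (fun χ hχ => hall χ (Or.inr hχ))
    · intro hh h1 h2
      exact hh (fun χ hχ => hχ.elim (fun he => he ▸ h1) (h2 χ))

lemma memDeriv_of_impList (L : List (Formula V)) (φ : Formula V)
    (h : MemDeriv (∅ : Set (Formula V)) (impList L φ))
    (hL : ∀ ψ ∈ L, MemDeriv (∅ : Set (Formula V)) ψ) :
    MemDeriv (∅ : Set (Formula V)) φ := by
  induction L with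
  | nil => exact h
  | cons ψ L ih =>
    exact ih (MemDeriv.mp h (hL ψ List.mem_cons_self))
      (fun χ hχ => hL χ (List.mem_cons_of_mem ψ hχ))

/-- All instances of the memoryless axioms indexed by a triple of sets. -/
def axForms (t : Set V × Set V × Set V) : List (Formula V) :=
  (if h : t.1.Nonempty ∧ t.2.1.Nonempty ∧ t.1 ⊆ t.2.1
    then [Formula.nav t.1 t.2.1 h.1 h.2.1] else []) ++
  (if h : t.1.Nonempty ∧ t.2.1.Nonempty ∧ t.2.2.Nonempty
    then [Formula.imp (.nav t.1 t.2.1 h.1 h.2.1)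
           (.nav (t.1 ∪ t.2.2) (t.2.1 ∪ t.2.2) h.1.inl h.2.1.inl)] else []) ++
  (if h : t.1.Nonempty ∧ t.2.1.Nonempty ∧ t.2.2.Nonempty ∧ t.1 ⊆ t.2.1
    then [Formula.imp (.nav t.2.1 t.2.2 h.2.1 h.2.2.1) (.nav t.1 t.2.2 h.1 h.2.2.1)]
    else [])

lemma axForms_deriv (t : Set V × Set V × Set V) :
    ∀ ψ ∈ axForms t, MemDeriv (∅ : Set (Formula V)) ψ := by
  intro ψ hψ
  rcases List.mem_append.mp hψ with h1 | h2
  · rcases List.mem_append.mp h1 with ha | hb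
    · split_ifs at ha with h
      · rw [List.mem_singleton.mp ha]
        exact MemDeriv.refl h.1 h.2.1 h.2.2
      · simp at ha
    · split_ifs at hb with h
      · rw [List.mem_singleton.mp hb]
        exact MemDeriv.aug h.1 h.2.1 h.2.2
      · simp at hb
  · split_ifs at h2 with h
    · rw [List.mem_singleton.mp h2]
      exact MemDeriv.mono h.1 h.2.1 h.2.2.1 h.2.2.2
    · simp at h2

lemma mem_axForms_refl {A B : Set V} (hA : A.Nonempty) (hB : B.Nonempty) (hsub : A ⊆ B) :
    Formula.nav A B hA hB ∈ axForms (A, B, B) := by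
  apply List.mem_append.mpr
  left
  apply List.mem_append.mpr
  left
  rw [dif_pos ⟨hA, hB, hsub⟩]
  exact List.mem_singleton.mpr rfl

lemma mem_axForms_aug {A B C : Set V} (hA : A.Nonempty) (hB : B.Nonempty) (hC : C.Nonempty) :
    Formula.imp (.nav A B hA hB) (.nav (A ∪ C) (B ∪ C) hA.inl hB.inl) ∈
      axForms (A, B, C) := by
  apply List.mem_append.mpr
  left
  apply List.mem_append.mpr
  right
  rw [dif_pos ⟨hA, hB, hC⟩]
  exact List.mem_singleton.mpr rfl

lemma mem_axForms_mono {A A' B : Set V} (hA : A.Nonempty) (hA' : A'.Nonempty)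
    (hB : B.Nonempty) (hsub : A ⊆ A') :
    Formula.imp (.nav A' B hA' hB) (.nav A B hA hB) ∈ axForms (A, A', B) := by
  apply List.mem_append.mpr
  right
  rw [dif_pos ⟨hA, hA', hB, hsub⟩]
  exact List.mem_singleton.mpr rfl

variable [Fintype V]

/-- The (finite) list of all instances of the memoryless axioms. -/
def axList : List (Formula V) :=
  (Finset.univ : Finset (Set V × Set V × Set V)).toList.flatMap axForms

lemma axList_deriv : ∀ ψ ∈ (axList : List (Formula V)), MemDeriv (∅ : Set (Formula V)) ψ := by
  intro ψ hψ
  obtain ⟨t, _, ht⟩ := List.mem_flatMap.mp hψ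
  exact axForms_deriv t ψ ht

lemma mem_axList {ψ : Formula V} (t : Set V × Set V × Set V) (h : ψ ∈ axForms t) :
    ψ ∈ (axList : List (Formula V)) :=
  List.mem_flatMap.mpr ⟨t, Finset.mem_toList.mpr (Finset.mem_univ t), h⟩

lemma standard_of_axioms {u : Set V → Set V → Prop}
    (hall : ∀ ψ ∈ (axList : List (Formula V)), ψ.evalWith u) : Standard u := by
  refine ⟨?_, ?_, ?_⟩
  · intro A B hA hB hsub
    exact hall _ (mem_axList (A, B, B) (mem_axForms_refl hA hB hsub))
  · intro A B C hA hB hC hAB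
    exact hall _ (mem_axList (A, B, C) (mem_axForms_aug hA hB hC)) hAB
  · intro A A' B hA hA' hB hsub hA'B
    exact hall _ (mem_axList (A, A', B) (mem_axForms_mono hA hA' hB hsub)) hA'B

end MemCompleteness
/-- Completeness for memoryless strategies. -/
theorem memoryless_completeness [Fintype V] (φ : Formula V)
    (h : ∀ T : TransitionSystem V, SatM T φ) :
    MemDeriv (∅ : Set (Formula V)) φ := by
  have hV : Nonempty V := formula_nonempty φ
  apply memDeriv_of_impList axList φ
  · apply MemDeriv.taut
    intro u
    rw [evalWith_impList]
    intro hall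
    have hstd : Standard u := standard_of_axioms hall
    have hT := h (Model u hstd hV)
    rw [satM_iff_evalWith] at hT
    exact (evalWith_congr (fun A B hA hB => model_atom hstd hV A B hA hB) φ).mp hT
  · exact axList_deriv
end
end Nav
end

section
/- Soundness of the Augmentation axiom for recall strategies: for every transition system T and all nonempty sets A, B, C ⊆ V, if there exists a recall strategy s of T with Path_s(A) ⊆ Visit(B), then there exists a recall strategy s' of T with Path_{s'}(A ∪ C) ⊆ Visit(B ∪ C). -/
namespace Nav

noncomputable section

attribute [local instance] Classical.propDecidable

variable {V : Type}

open TransitionSystem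

/-- Soundness of the Augmentation axiom for recall strategies. -/
theorem augmentation_sound [Fintype V] (T : TransitionSystem V) (A B C : Set V)
    (hA : A.Nonempty) (hB : B.Nonempty) (hC : C.Nonempty)
    (h : ∃ s : RecallStrategy T, PathSet s A ⊆ VisitSet s B) :
    ∃ s' : RecallStrategy T, PathSet s' (A ∪ C) ⊆ VisitSet s' (B ∪ C) := by
  obtain ⟨s, hs⟩ := h
  refine ⟨s, ?_⟩
  rintro π ⟨hπ, hA0⟩
  rw [show T.starSet (A ∪ C) = T.starSet A ∪ T.starSet C from Set.image_union _ _ _] at hA0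
  rcases hA0 with hA0 | hC0
  · obtain ⟨hπ', k, hk⟩ := hs ⟨hπ, hA0⟩
    exact ⟨hπ', k, by
      rw [show T.starSet (B ∪ C) = T.starSet B ∪ T.starSet C from Set.image_union _ _ _]
      exact Or.inl hk⟩
  · exact ⟨hπ, 0, by
      rw [show T.starSet (B ∪ C) = T.starSet B ∪ T.starSet C from Set.image_union _ _ _]
      exact Or.inr hC0⟩
end
end Nav
end

section
/- Soundness of the Transitivity axiom for recall strategies: for every transition system T and all nonempty sets A, B, C ⊆ V, if there exist recall strategies s1 and s2 of T with Path_{s1}(A) ⊆ Visit(B) and Path_{s2}(B) ⊆ Visit(C), then there exists a recall strategy s of T with Path_s(A) ⊆ Visit(C). -/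
namespace Nav

noncomputable section

attribute [local instance] Classical.propDecidable

variable {V : Type}

open TransitionSystem

/-- Soundness of the Transitivity axiom for recall strategies. -/
theorem transitivity_sound [Fintype V] (T : TransitionSystem V) (A B C : Set V)
    (hA : A.Nonempty) (hB : B.Nonempty) (hC : C.Nonempty)
    (h1 : ∃ s1 : RecallStrategy T, PathSet s1 A ⊆ VisitSet s1 B)
    (h2 : ∃ s2 : RecallStrategy T, PathSet s2 B ⊆ VisitSet s2 C) :
    ∃ s : RecallStrategy T, PathSet s A ⊆ VisitSet s C := by
  obtain ⟨s1, hs1⟩ := h1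
  obtain ⟨s2, hs2⟩ := h2
  refine ⟨s1.compB s2 B, ?_⟩
  rintro π ⟨⟨hv, hact⟩, hA0⟩
  by_cases H : ∃ k, T.cls (π.w k) ∈ T.starSet B
  · set m := Nat.find H with hmdef
    have hm : T.cls (π.w m) ∈ T.starSet B := Nat.find_spec H
    have hlt : ∀ j < m, T.cls (π.w j) ∉ T.starSet B := fun j hj => Nat.find_min H hj
    set π' : Path T := ⟨fun k => π.w (m + k), fun k => π.i (m + k)⟩ with hπ'
    have hv' : π'.Valid := fun k => hv (m + k)
    have hact' : ∀ k, π'.i k = s2.act (π'.prefixH hv' k) := by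
      intro k
      have hk1 : π.i (m + k) = (s1.compB s2 B).act (π.prefixH hv (m + k)) := hact (m + k)
      have hcond : ¬ ∀ j ≤ (π.prefixH hv (m + k)).n,
          T.cls ((π.prefixH hv (m + k)).w j) ∉ T.starSet B := by
        push_neg
        exact ⟨m, by simp [Path.prefixH], hm⟩
      have hidx : (π.prefixH hv (m + k)).truncIdx B = m := by
        have hub : (π.prefixH hv (m + k)).truncIdx B ≤ m := Nat.find_le (Or.inr hm)
        have hspec : (π.prefixH hv (m + k)).truncIdx B = (π.prefixH hv (m + k)).n ∨
            T.cls ((π.prefixH hv (m + k)).w ((π.prefixH hv (m + k)).truncIdx B)) ∈ T.starSet B :=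
          Nat.find_spec (p := fun k' => k' = (π.prefixH hv (m + k)).n ∨
            T.cls ((π.prefixH hv (m + k)).w k') ∈ T.starSet B) ⟨_, Or.inl rfl⟩
        by_contra hne
        have hltm : (π.prefixH hv (m + k)).truncIdx B < m := lt_of_le_of_ne hub hne
        rcases hspec with he | hbm
        · have : (π.prefixH hv (m + k)).n = m + k := rfl
          omega
        · exact hlt _ hltm hbm
      rw [show π'.i k = π.i (m + k) from rfl, hk1]
      show (if ∀ j ≤ (π.prefixH hv (m + k)).n,
            T.cls ((π.prefixH hv (m + k)).w j) ∉ T.starSet B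
          then s1.act (π.prefixH hv (m + k))
          else s2.act ((π.prefixH hv (m + k)).trunc B)) = _
      rw [if_neg hcond]
      apply s2.respects
      refine ⟨?_, ?_, ?_⟩
      · show (π.prefixH hv (m + k)).n - (π.prefixH hv (m + k)).truncIdx B = k
        rw [hidx]
        show m + k - m = k
        omega
      · intro j _
        show π.i ((π.prefixH hv (m + k)).truncIdx B + j) = π.i (m + j)
        rw [hidx]
      · intro j _
        show T.sim.r (π.w ((π.prefixH hv (m + k)).truncIdx B + j)) (π.w (m + j))
        rw [hidx]
    have hmem : π' ∈ PathSet s2 B := ⟨⟨hv', hact'⟩, hm⟩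
    obtain ⟨-, k, hk⟩ := hs2 hmem
    exact ⟨⟨hv, hact⟩, m + k, hk⟩
  · exfalso
    push_neg at H
    have hact1 : ∀ k, π.i k = s1.act (π.prefixH hv k) := by
      intro k
      rw [hact k]
      show (if ∀ j ≤ (π.prefixH hv k).n,
            T.cls ((π.prefixH hv k).w j) ∉ T.starSet B
          then s1.act (π.prefixH hv k)
          else s2.act ((π.prefixH hv k).trunc B)) = _
      have hc : ∀ j ≤ (π.prefixH hv k).n,
          T.cls ((π.prefixH hv k).w j) ∉ T.starSet B := fun j _ => H j
      rw [if_pos hc]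
    obtain ⟨-, k, hk⟩ := hs1 ⟨⟨hv, hact1⟩, hA0⟩
    exact H k hk
end
end Nav
end

section
/- For any recall strategies s1, s2 of a transition system T and any sets A, B ⊆ V, if a path π belongs to Path_{s1∘_B s2}(A) ∩ Visit(B), then its truncation π|_B belongs to Path_{s2}(B). -/
namespace Nav

noncomputable section

attribute [local instance] Classical.propDecidable

variable {V : Type}

open TransitionSystem

/-- If `π ∈ Path_{s1∘_B s2}(A) ∩ Visit(B)` then `π|_B ∈ Path_{s2}(B)`. -/
theorem trunc_path_in_PathSet [Fintype V] (T : TransitionSystem V)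
    (s1 s2 : RecallStrategy T) (A B : Set V) (π : Path T)
    (hπ : π ∈ PathSet (s1.compB s2 B) A ∩ VisitSet (s1.compB s2 B) B) :
    π.trunc B ∈ PathSet s2 B := by
  obtain ⟨⟨⟨hv, hstep⟩, hA0⟩, ⟨_, hvisit⟩⟩ := hπ
  have H : ∃ k, T.cls (π.w k) ∈ T.starSet B := hvisit
  set N := Nat.find H with hN
  have hNspec : T.cls (π.w N) ∈ T.starSet B := Nat.find_spec H
  have hNmin : ∀ m < N, T.cls (π.w m) ∉ T.starSet B := fun m hm => Nat.find_min H hm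
  have htr : π.trunc B = ⟨fun k => π.w (N + k), fun k => π.i (N + k)⟩ := by
    rw [Path.trunc, dif_pos H]
  rw [htr]
  have hv' : Path.Valid (⟨fun k => π.w (N + k), fun k => π.i (N + k)⟩ : Path T) := by
    intro k
    exact hv (N + k)
  constructor
  · refine ⟨hv', fun k => ?_⟩
    set h := π.prefixH hv (N + k) with hh
    have hhn : h.n = N + k := rfl
    have hhw : ∀ j, h.w j = π.w j := fun _ => rfl
    have hncond : ¬ ∀ j ≤ h.n, T.cls (h.w j) ∉ T.starSet B := by
      push_neg
      exact ⟨N, by omega, hNspec⟩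
    have hidx : h.truncIdx B = N := by
      have le1 : h.truncIdx B ≤ N := Nat.find_le (Or.inr hNspec)
      have le2 : N ≤ h.truncIdx B := by
        by_contra hc
        push_neg at hc
        have hsp := Nat.find_spec (p := fun m => m = h.n ∨ T.cls (h.w m) ∈ T.starSet B)
          ⟨h.n, Or.inl rfl⟩
        have hsp' : h.truncIdx B = h.n ∨ T.cls (h.w (h.truncIdx B)) ∈ T.starSet B := hsp
        rcases hsp' with e | hb
        · rw [hhn] at e
          omega
        · exact hNmin _ hc hb
      omega
    have hcomp : π.i (N + k) = (s1.compB s2 B).act h := hstep (N + k)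
    rw [hcomp]
    show (if ∀ j ≤ h.n, T.cls (h.w j) ∉ T.starSet B then s1.act h else s2.act (h.trunc B)) = _
    rw [if_neg hncond]
    apply s2.respects
    refine ⟨?_, ?_, ?_⟩
    · show h.n - h.truncIdx B = k
      rw [hhn, hidx]
      omega
    · intro j hj
      show h.i (h.truncIdx B + j) = π.i (N + j)
      rw [hidx]
      rfl
    · intro j hj
      show T.sim.r (h.w (h.truncIdx B + j)) (π.w (N + j))
      rw [hidx]
      exact T.sim.refl _
  · show T.cls (π.w (N + 0)) ∈ T.starSet B
    simpa using hNspec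
end
end Nav
end

section
/- For any recall strategies s1, s2 of a transition system T and any sets A, B ⊆ V, if Path_{s1}(A) ⊆ Visit(B), then Path_{s1∘_B s2}(A) ⊆ Visit(B). -/
namespace Nav

noncomputable section

attribute [local instance] Classical.propDecidable

variable {V : Type}

open TransitionSystem

/-- If `Path_{s1}(A) ⊆ Visit(B)` then `Path_{s1∘_B s2}(A) ⊆ Visit(B)`. -/
theorem comp_preserves_visit [Fintype V] (T : TransitionSystem V)
    (s1 s2 : RecallStrategy T) (A B : Set V)
    (h : PathSet s1 A ⊆ VisitSet s1 B) :
    PathSet (s1.compB s2 B) A ⊆ VisitSet (s1.compB s2 B) B := by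
  rintro π ⟨⟨hv, hact⟩, hA⟩
  refine ⟨⟨hv, hact⟩, ?_⟩
  by_contra hno
  push_neg at hno
  have hno' : ∀ k, T.cls (π.w k) ∉ T.starSet B := hno
  have hs1 : ∀ k, π.i k = s1.act (π.prefixH hv k) := by
    intro k
    rw [hact k]
    show (if ∀ j ≤ (π.prefixH hv k).n,
        T.cls ((π.prefixH hv k).w j) ∉ T.starSet B then s1.act (π.prefixH hv k)
        else s2.act ((π.prefixH hv k).trunc B)) = _
    exact if_pos (fun j _ => hno' j)
  obtain ⟨-, k, hk⟩ := h ⟨⟨hv, hs1⟩, hA⟩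
  exact hno' k hk
end
end Nav
end

section
/- For any recall strategies s1, s2 of a transition system T and any sets A, B ⊆ V, if Path_{s1∘_B s2}(A) ⊆ Visit(B), then (Path_{s1∘_B s2}(A))|_B ⊆ Path_{s2}(B). -/
namespace Nav

noncomputable section

attribute [local instance] Classical.propDecidable

variable {V : Type}

open TransitionSystem

/-- If `Path_{s1∘_B s2}(A) ⊆ Visit(B)` then
`(Path_{s1∘_B s2}(A))|_B ⊆ Path_{s2}(B)`. -/
theorem comp_trunc_subset [Fintype V] (T : TransitionSystem V)
    (s1 s2 : RecallStrategy T) (A B : Set V)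
    (h : PathSet (s1.compB s2 B) A ⊆ VisitSet (s1.compB s2 B) B) :
    (fun π : Path T => π.trunc B) '' PathSet (s1.compB s2 B) A ⊆ PathSet s2 B := by
  rintro _ ⟨π, hπ, rfl⟩
  obtain ⟨⟨hv, hact⟩, hA⟩ := hπ
  obtain ⟨-, K, hK⟩ := h ⟨⟨hv, hact⟩, hA⟩
  have H : ∃ k, T.cls (π.w k) ∈ T.starSet B := ⟨K, hK⟩
  set N := Nat.find H with hNdef
  have hNB : T.cls (π.w N) ∈ T.starSet B := Nat.find_spec H
  have hmin : ∀ j < N, T.cls (π.w j) ∉ T.starSet B := fun j hj => Nat.find_min H hj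
  have htr : π.trunc B = ⟨fun k => π.w (N + k), fun k => π.i (N + k)⟩ := by
    simp only [Path.trunc, dif_pos H]
    congr
  show π.trunc B ∈ PathSet s2 B
  rw [htr]
  set π' : Path T := ⟨fun k => π.w (N + k), fun k => π.i (N + k)⟩ with hπ'def
  have hv' : π'.Valid := by
    intro k
    have := hv (N + k)
    simpa [π', Nat.add_assoc] using this
  refine ⟨⟨hv', ?_⟩, hNB⟩
  intro k
  have hEq := hact (N + k)
  show π.i (N + k) = s2.act (π'.prefixH hv' k)
  rw [hEq]
  set h0 : History T := π.prefixH hv (N + k) with hh0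
  have hn0 : h0.n = N + k := rfl
  have hw0 : ∀ j, h0.w j = π.w j := fun j => rfl
  have hi0 : ∀ j, h0.i j = π.i j := fun j => rfl
  have hcond : ¬ ∀ j ≤ h0.n, T.cls (h0.w j) ∉ T.starSet B := by
    push_neg
    exact ⟨N, by omega, by rw [hw0]; exact hNB⟩
  have hact0 : (s1.compB s2 B).act h0 = s2.act (h0.trunc B) := by
    show (if ∀ j ≤ h0.n, T.cls (h0.w j) ∉ T.starSet B then s1.act h0
          else s2.act (h0.trunc B)) = s2.act (h0.trunc B)
    rw [if_neg hcond]
  rw [hact0]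
  have hle : h0.truncIdx B ≤ N := Nat.find_le (Or.inr (by rw [hw0]; exact hNB))
  have hspec : h0.truncIdx B = h0.n ∨ T.cls (h0.w (h0.truncIdx B)) ∈ T.starSet B :=
    Nat.find_spec (p := fun j => j = h0.n ∨ T.cls (h0.w j) ∈ T.starSet B) ⟨h0.n, Or.inl rfl⟩
  have hidx : h0.truncIdx B = N := by
    rcases hspec with he | hb
    · omega
    · by_contra hne
      exact hmin (h0.truncIdx B) (by omega) (by rw [← hw0]; exact hb)
  apply s2.respects
  refine ⟨?_, ?_, ?_⟩
  · show h0.n - h0.truncIdx B = k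
    omega
  · intro j hj
    show h0.i (h0.truncIdx B + j) = π.i (N + j)
    rw [hidx, hi0]
  · intro j hj
    show T.sim.r (h0.w (h0.truncIdx B + j)) (π.w (N + j))
    rw [hidx]
    exact T.sim.refl _
end
end Nav
end

section
/- In the canonical transition system T(X), the black-hole state ⟲ does not belong to G^s_n for any recall strategy s, any nonempty G ⊆ V, and any n ≥ 0. -/
namespace Nav

noncomputable section

attribute [local instance] Classical.propDecidable

variable {V : Type}

open TransitionSystem

/-- In the canonical system `T(X)` the black hole `⟲` never
belongs to `G^s_n`. -/
theorem black_hole_not_in_Gset [Fintype V] (hV : Nonempty V)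
    (X : Set (Formula V)) (hX : MaxConsistent X)
    (s : RecallStrategy (CanonT X hX hV)) (G : Set V) (hG : G.Nonempty) (n : ℕ) :
    Sum.inr () ∉ Gset X hX hV s G n := by
  induction n with
  | zero =>
    rintro ⟨v, -, hv⟩
    exact Sum.inl_ne_inr hv
  | succ n ih =>
    rintro (hmem | ⟨h, hhd, hsub⟩)
    · exact ih hmem
    · apply ih
      apply hsub
      rw [hhd]
      show Sum.inr () ∈ CanonΔ X (s.act h) (Sum.inr ())
      simp [CanonΔ]
end
end Nav
end
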